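/- Let W be the d-dimensional Brownian sheet with d ≥ 5. Then for every fixed x ∈ ℝ^d and all 0 < a < b, with probability one there is no (s,t) ∈ [a,b]² with W(s,t) = x. -/

import Mathlib

open MeasureTheory ProbabilityTheory Real Filter Set

/-- Covariance of the two-parameter Brownian sheet. -/
noncomputable def sheetCov (p q : ℝ × ℝ) : ℝ := min p.1 q.1 * min p.2 q.2

/-- `W` is a (one-dimensional) two-parameter Brownian sheet: it has continuous sample
paths and centered Gaussian finite-dimensional distributions over `ℝ₊²` with covariance
`E[W s · W t] = (s₁ ∧ t₁)(s₂ ∧ t₂)`. -/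
def IsBrownianSheet {Ω : Type*} [MeasureSpace Ω] (W : ℝ × ℝ → Ω → ℝ) : Prop :=
  (∀ ω, Continuous fun p => W p ω) ∧
  ∀ (n : ℕ) (p : Fin n → ℝ × ℝ) (c : Fin n → ℝ),
    (∀ i, 0 ≤ (p i).1 ∧ 0 ≤ (p i).2) →
    Measure.map (fun ω => ∑ i, c i * W (p i) ω) (ℙ : Measure Ω) =
      gaussianReal 0 (Real.toNNReal (∑ i, ∑ j, c i * c j * sheetCov (p i) (p j)))
/-- `W` is a `d`-dimensional two-parameter Brownian sheet: its coordinates are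
independent one-dimensional Brownian sheets. -/
def IsBrownianSheetD {Ω : Type*} [MeasureSpace Ω] (d : ℕ) (W : ℝ × ℝ → Ω → Fin d → ℝ) :
    Prop :=
  (∀ i : Fin d, IsBrownianSheet fun p ω => W p ω i) ∧
  iIndepFun (m := fun _ : Fin d => (inferInstance : MeasurableSpace (ℝ × ℝ → ℝ)))
    (fun i ω p => W p ω i) (ℙ : Measure Ω)


open scoped ENNReal NNReal

section AuxLemmas

lemma gauss_ball {v : ℝ≥0} {a c ε : ℝ} (ha : 0 < a) (hv : a^2 ≤ (v:ℝ)) (hε : 0 ≤ ε) :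
    gaussianReal 0 v (Icc (c - ε) (c + ε)) ≤ ENNReal.ofReal (ε / a) := by
  have hv0 : v ≠ 0 := by
    intro h
    rw [h] at hv
    simp only [NNReal.coe_zero] at hv
    nlinarith
  rw [gaussianReal_apply 0 hv0]
  have hsq : 2 * a ≤ √(2 * π * v) := by
    rw [show (2*a) = √((2*a)^2) by rw [Real.sqrt_sq (by positivity)]]
    apply Real.sqrt_le_sqrt
    nlinarith [Real.pi_gt_three]
  have hb : ∀ x : ℝ, gaussianPDF 0 v x ≤ ENNReal.ofReal ((√(2 * π * v))⁻¹) := by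
    intro x
    apply ENNReal.ofReal_le_ofReal
    rw [gaussianPDFReal]
    have h1 : rexp (-(x - 0)^2 / (2 * v)) ≤ 1 := by
      rw [Real.exp_le_one_iff]
      have : (0:ℝ) < (v:ℝ) := by nlinarith
      apply div_nonpos_of_nonpos_of_nonneg <;> nlinarith
    have h2 : (0:ℝ) ≤ (√(2 * π * v))⁻¹ := by positivity
    nlinarith
  calc ∫⁻ x in Icc (c - ε) (c + ε), gaussianPDF 0 v x
      ≤ ∫⁻ _ in Icc (c - ε) (c + ε), ENNReal.ofReal ((√(2 * π * v))⁻¹) :=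
        lintegral_mono (fun x => hb x)
    _ = ENNReal.ofReal ((√(2 * π * v))⁻¹) * volume (Icc (c - ε) (c + ε)) := by
        rw [setLIntegral_const]
    _ = ENNReal.ofReal ((√(2 * π * v))⁻¹) * ENNReal.ofReal (2 * ε) := by
        rw [Real.volume_Icc]
        congr 1
        ring
    _ ≤ ENNReal.ofReal ((2 * a)⁻¹ * (2 * ε)) := by
        rw [← ENNReal.ofReal_mul (by positivity)]
        apply ENNReal.ofReal_le_ofReal
        have hinv : (√(2 * π * v))⁻¹ ≤ (2 * a)⁻¹ := by
          apply inv_anti₀ (by positivity) hsq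
        nlinarith [hinv, hε]
    _ = ENNReal.ofReal (ε / a) := by
        congr 1
        field_simp

lemma gauss_tail_Ici {v : ℝ≥0} {lam : ℝ} (hv : v ≠ 0) (hlam : 0 < lam)
    (hvlam : (v:ℝ) ≤ lam^2) :
    gaussianReal 0 v (Ici lam) ≤ ENNReal.ofReal (rexp (-lam^2 / (2*v))) := by
  have hvpos : 0 < (v:ℝ) := by positivity
  set A : ℝ := (√(2 * π * (v:ℝ)))⁻¹ with hA
  have hApos : 0 < A := by positivity
  set c : ℝ := lam / v with hc
  have hcpos : 0 < c := by positivity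
  set C : ℝ := A * rexp (lam^2 / (2*v)) with hC
  have hCpos : 0 < C := by positivity
  rw [gaussianReal_apply 0 hv]
  have hpt : ∀ y ∈ Ici lam, gaussianPDF 0 v y ≤ ENNReal.ofReal (C * rexp (-(c * y))) := by
    intro y hy
    apply ENNReal.ofReal_le_ofReal
    rw [gaussianPDFReal, ← hA]
    have hy' : lam ≤ y := hy
    have hexp : rexp (-(y - 0)^2 / (2*(v:ℝ))) ≤ rexp (lam^2/(2*(v:ℝ))) * rexp (-(c*y)) := by
      rw [← Real.exp_add]
      apply Real.exp_le_exp.mpr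
      rw [hc]
      have h2v : (0:ℝ) < 2 * (v:ℝ) := by positivity
      have heq : lam^2/(2*(v:ℝ)) + -(lam/(v:ℝ)*y) = (lam^2 - 2*lam*y)/(2*(v:ℝ)) := by
        field_simp
        ring
      rw [heq, div_le_div_iff₀ h2v h2v]
      nlinarith [sq_nonneg (y - lam)]
    calc A * rexp (-(y - 0)^2 / (2*(v:ℝ))) ≤ A * (rexp (lam^2/(2*(v:ℝ))) * rexp (-(c*y))) :=
          mul_le_mul_of_nonneg_left hexp hApos.le
      _ = C * rexp (-(c*y)) := by rw [hC]; ring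
  have hint : IntegrableOn (fun y => C * rexp (-(c * y))) (Ici lam) volume := by
    have h0 : IntegrableOn (fun y => rexp (-(c * y))) (Ici lam) volume := by
      rw [integrableOn_Ici_iff_integrableOn_Ioi]
      simpa [neg_mul, mul_comm] using exp_neg_integrableOn_Ioi lam hcpos
    exact h0.const_mul C
  calc ∫⁻ y in Ici lam, gaussianPDF 0 v y
      ≤ ∫⁻ y in Ici lam, ENNReal.ofReal (C * rexp (-(c * y))) :=
        setLIntegral_mono (by fun_prop) hpt
    _ = ENNReal.ofReal (∫ y in Ici lam, C * rexp (-(c * y))) := by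
        rw [ofReal_integral_eq_lintegral_ofReal hint]
        exact ae_of_all _ (fun y => by positivity)
    _ ≤ ENNReal.ofReal (rexp (-lam^2 / (2*v))) := by
        apply ENNReal.ofReal_le_ofReal
        rw [integral_const_mul]
        rw [MeasureTheory.integral_Ici_eq_integral_Ioi]
        have hsub : (∫ y in Ioi lam, rexp (-(c * y))) = c⁻¹ * rexp (-(c * lam)) := by
          have := integral_comp_mul_left_Ioi (fun u => rexp (-u)) lam hcpos
          simp only [smul_eq_mul] at this
          rw [this, integral_exp_neg_Ioi]
        rw [hsub]
        have key : C * (c⁻¹ * rexp (-(c * lam))) = (A * ((v:ℝ) / lam)) * rexp (-lam^2 / (2*(v:ℝ))) := by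
          rw [hC, hc, inv_div]
          calc A * rexp (lam ^ 2 / (2 * (v:ℝ))) * ((v:ℝ) / lam * rexp (-(lam / (v:ℝ) * lam)))
              = A * ((v:ℝ) / lam) * (rexp (lam ^ 2 / (2 * (v:ℝ))) * rexp (-(lam / (v:ℝ) * lam))) := by
                ring
            _ = A * ((v:ℝ) / lam) * rexp (-lam ^ 2 / (2 * (v:ℝ))) := by
                rw [← Real.exp_add]
                congr 1
                field_simp
                ring
        rw [key]
        have hAv : A * ((v:ℝ) / lam) ≤ 1 := by
          rw [hA]
          have h1 : (v:ℝ) / lam ≤ √(v:ℝ) := by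
            rw [div_le_iff₀ hlam]
            have hsqv : √(v:ℝ) ≤ lam := by
              rw [show lam = √(lam^2) by rw [Real.sqrt_sq hlam.le]]
              exact Real.sqrt_le_sqrt hvlam
            nlinarith [Real.sq_sqrt hvpos.le, Real.sqrt_nonneg (v:ℝ)]
          have h2 : √(v:ℝ) ≤ √(2 * π * (v:ℝ)) := by
            apply Real.sqrt_le_sqrt
            nlinarith [Real.pi_gt_three]
          have h3 : (0:ℝ) < √(2 * π * (v:ℝ)) := by positivity
          rw [inv_mul_le_iff₀ h3, mul_one]
          linarith
        nlinarith [Real.exp_pos (-lam^2 / (2*(v:ℝ)))]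

lemma gauss_tail {v : ℝ≥0} {u lam : ℝ} (hu0 : 0 < u) (hvu : (v:ℝ) ≤ u)
    (hulam : u ≤ lam^2) (hlam : 0 < lam) :
    gaussianReal 0 v {y | lam ≤ |y|} ≤ ENNReal.ofReal (2 * rexp (-lam^2 / (2*u))) := by
  have hmeas : MeasurableSet {y : ℝ | lam ≤ |y|} :=
    (isClosed_le continuous_const continuous_abs).measurableSet
  rcases eq_or_ne v 0 with hv | hv
  · rw [hv, gaussianReal_zero_var, Measure.dirac_apply' _ hmeas]
    have : (0:ℝ) ∉ {y : ℝ | lam ≤ |y|} := by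
      simp only [mem_setOf_eq, abs_zero, not_le]
      exact hlam
    rw [indicator_of_notMem this]
    exact zero_le
  · have hvpos : (0:ℝ) < (v:ℝ) := by positivity
    have hvlam : (v:ℝ) ≤ lam^2 := le_trans hvu hulam
    have hIci := gauss_tail_Ici hv hlam hvlam
    have hIic : gaussianReal 0 v (Iic (-lam)) = gaussianReal 0 v (Ici lam) := by
      have hmap := gaussianReal_map_const_mul (μ := 0) (v := v) (-1)
      have hpre : (fun y : ℝ => -1 * y) ⁻¹' (Iic (-lam)) = Ici lam := by
        ext y
        simp only [mem_preimage, mem_Iic, mem_Ici, neg_one_mul, neg_le_neg_iff]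
      have hmm : Measurable (fun y : ℝ => -1 * y) := measurable_id'.const_mul _
      calc gaussianReal 0 v (Iic (-lam))
          = ((gaussianReal 0 v).map (-1 * ·)) (Iic (-lam)) := by
            rw [hmap]
            congr 2
            · norm_num
            · ext
              simp
        _ = gaussianReal 0 v ((fun y : ℝ => -1 * y) ⁻¹' (Iic (-lam))) :=
            Measure.map_apply hmm measurableSet_Iic
        _ = gaussianReal 0 v (Ici lam) := by rw [hpre]
    have hsub : {y : ℝ | lam ≤ |y|} ⊆ Iic (-lam) ∪ Ici lam := by
      intro y hy
      simp only [mem_setOf_eq] at hy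
      rcases abs_cases y with ⟨h1, _⟩ | ⟨h1, _⟩
      · right; exact mem_Ici.mpr (h1 ▸ hy)
      · left; exact mem_Iic.mpr (by linarith [h1 ▸ hy])
    have hmono : rexp (-lam^2 / (2*(v:ℝ))) ≤ rexp (-lam^2 / (2*u)) := by
      apply Real.exp_le_exp.mpr
      rw [neg_div, neg_div, neg_le_neg_iff]
      apply div_le_div_of_nonneg_left (by positivity) (by positivity) (by linarith)
    calc gaussianReal 0 v {y : ℝ | lam ≤ |y|}
        ≤ gaussianReal 0 v (Iic (-lam) ∪ Ici lam) := measure_mono hsub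
      _ ≤ gaussianReal 0 v (Iic (-lam)) + gaussianReal 0 v (Ici lam) := measure_union_le _ _
      _ = gaussianReal 0 v (Ici lam) + gaussianReal 0 v (Ici lam) := by rw [hIic]
      _ ≤ ENNReal.ofReal (rexp (-lam^2 / (2*(v:ℝ)))) + ENNReal.ofReal (rexp (-lam^2 / (2*(v:ℝ)))) :=
          add_le_add hIci hIci
      _ = ENNReal.ofReal (2 * rexp (-lam^2 / (2*(v:ℝ)))) := by
          rw [← ENNReal.ofReal_add (by positivity) (by positivity)]
          congr 1
          ring
      _ ≤ ENNReal.ofReal (2 * rexp (-lam^2 / (2*u))) := by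
          apply ENNReal.ofReal_le_ofReal
          linarith

variable {Ω : Type*} [MeasureSpace Ω]

lemma aemeasurable_of_map_gauss {f : Ω → ℝ} {m : ℝ} {v : ℝ≥0}
    (h : Measure.map f (ℙ : Measure Ω) = gaussianReal m v) : AEMeasurable f (ℙ : Measure Ω) := by
  by_contra hf
  have h1 := measure_univ (μ := gaussianReal m v)
  rw [← h, Measure.map_of_not_aemeasurable hf] at h1
  simp at h1

lemma sheet_single_law {W1 : ℝ × ℝ → Ω → ℝ} (hW : IsBrownianSheet W1) {u : ℝ × ℝ}
    (hu1 : 0 ≤ u.1) (hu2 : 0 ≤ u.2) :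
    Measure.map (fun ω => W1 u ω) (ℙ : Measure Ω) = gaussianReal 0 ((u.1 * u.2).toNNReal) := by
  have h := hW.2 1 (fun _ => u) (fun _ => 1) (fun _ => ⟨hu1, hu2⟩)
  simpa [sheetCov, min_self] using h

lemma sheet_diff_law {W1 : ℝ × ℝ → Ω → ℝ} (hW : IsBrownianSheet W1) {u v : ℝ × ℝ}
    (hu1 : 0 ≤ u.1) (hu2 : 0 ≤ u.2) (hv1 : 0 ≤ v.1) (hv2 : 0 ≤ v.2) :
    Measure.map (fun ω => W1 u ω - W1 v ω) (ℙ : Measure Ω) =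
      gaussianReal 0 ((u.1*u.2 + v.1*v.2 - 2 * (min u.1 v.1 * min u.2 v.2)).toNNReal) := by
  have h := hW.2 2 ![u, v] ![1, -1] (by
    intro i
    fin_cases i <;> simp [hu1, hu2, hv1, hv2])
  have hfun : (fun ω => ∑ i : Fin 2, ![(1:ℝ),-1] i * W1 (![u,v] i) ω)
      = fun ω => W1 u ω - W1 v ω := by
    funext ω
    simp [Fin.sum_univ_two]
    ring
  have hvar : (∑ i : Fin 2, ∑ j : Fin 2, ![(1:ℝ),-1] i * ![(1:ℝ),-1] j
        * sheetCov (![u,v] i) (![u,v] j))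
      = u.1*u.2 + v.1*v.2 - 2 * (min u.1 v.1 * min u.2 v.2) := by
    simp [Fin.sum_univ_two, sheetCov, min_self]
    rw [min_comm v.1 u.1, min_comm v.2 u.2]
    ring
  rw [hfun, hvar] at h
  exact h

lemma sheet_ball_prob [IsProbabilityMeasure (ℙ : Measure Ω)] {W1 : ℝ × ℝ → Ω → ℝ}
    (hW : IsBrownianSheet W1) {u : ℝ×ℝ} {a c ε : ℝ}
    (ha : 0 < a) (h1 : a ≤ u.1) (h2 : a ≤ u.2) (hε : 0 ≤ ε) :
    (ℙ : Measure Ω) ((fun ω => W1 u ω) ⁻¹' Icc (c - ε) (c + ε)) ≤ ENNReal.ofReal (ε / a) := by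
  have hlaw := sheet_single_law hW (le_trans ha.le h1) (le_trans ha.le h2)
  have hae := aemeasurable_of_map_gauss hlaw
  rw [← Measure.map_apply_of_aemeasurable hae measurableSet_Icc, hlaw]
  apply gauss_ball ha _ hε
  rw [Real.coe_toNNReal _ (by nlinarith)]
  nlinarith

lemma sheet_pair_prob [IsProbabilityMeasure (ℙ : Measure Ω)] {W1 : ℝ × ℝ → Ω → ℝ}
    (hW : IsBrownianSheet W1) {u v : ℝ×ℝ} {σ2 lam : ℝ}
    (hu1 : 0 ≤ u.1) (hu2 : 0 ≤ u.2) (hv1 : 0 ≤ v.1) (hv2 : 0 ≤ v.2)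
    (hσ : 0 < σ2) (hvar : u.1*u.2 + v.1*v.2 - 2*(min u.1 v.1 * min u.2 v.2) ≤ σ2)
    (hσlam : σ2 ≤ lam^2) (hlam : 0 < lam) :
    (ℙ : Measure Ω) {ω | lam ≤ |W1 u ω - W1 v ω|}
      ≤ ENNReal.ofReal (2 * rexp (-lam^2/(2*σ2))) := by
  have hlaw := sheet_diff_law hW hu1 hu2 hv1 hv2
  have hae := aemeasurable_of_map_gauss hlaw
  have hmeas : MeasurableSet {y : ℝ | lam ≤ |y|} :=
    (isClosed_le continuous_const continuous_abs).measurableSet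
  have hset : {ω | lam ≤ |W1 u ω - W1 v ω|}
      = (fun ω => W1 u ω - W1 v ω) ⁻¹' {y | lam ≤ |y|} := rfl
  rw [hset, ← Measure.map_apply_of_aemeasurable hae hmeas, hlaw]
  apply gauss_tail hσ _ hσlam hlam
  rw [Real.coe_toNNReal']
  exact max_le hvar hσ.le


lemma kpow_le_aux : ∀ k : ℕ, (k:ℝ) * (73/100)^k ≤ 37 * (3/4)^k := by
  intro k
  have h1 : ((73:ℝ)/100)^k = (73/75)^k * (3/4)^k := by
    rw [← mul_pow]
    norm_num
  rw [h1, ← mul_assoc]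
  apply mul_le_mul_of_nonneg_right _ (by positivity)
  -- (k:ℝ) * (73/75)^k ≤ 37
  have hber : 1 + (k:ℝ) * (2/73) ≤ (1 + 2/73)^k := by
    have := one_add_mul_le_pow (a := (2:ℝ)/73) (by norm_num) k
    linarith
  have h75 : ((75:ℝ)/73)^k = (1 + 2/73)^k := by norm_num
  have hpos : (0:ℝ) < (75/73:ℝ)^k := by positivity
  have hinv : ((73:ℝ)/75)^k = ((75/73:ℝ)^k)⁻¹ := by
    rw [← inv_pow]
    norm_num
  rw [hinv]
  rw [mul_inv_le_iff₀ hpos]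
  rw [h75]
  nlinarith [hber, Nat.cast_nonneg (α := ℝ) k]

lemma geo_sum34_aux (m : ℕ) : ∀ K : ℕ, (∑ k ∈ Finset.Ioc m K, ((3:ℝ)/4)^k) ≤ 3 * (3/4)^m := by
  have key : ∀ K, m ≤ K → (∑ k ∈ Finset.Ioc m K, ((3:ℝ)/4)^k) ≤ 3 * ((3/4)^m - (3/4)^K) := by
    intro K hK
    induction K, hK using Nat.le_induction with
    | base => simp [Finset.Ioc_self]
    | succ K hK ih =>
      rw [Finset.sum_Ioc_succ_top (by omega)]
      have hpow : ((3:ℝ)/4)^(K+1) = (3/4)*(3/4)^K := by ring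
      nlinarith [pow_nonneg (by norm_num : (0:ℝ) ≤ 3/4) K]
  intro K
  rcases le_or_gt m K with h | h
  · have := key K h
    nlinarith [pow_nonneg (by norm_num : (0:ℝ) ≤ 3/4) K]
  · rw [Finset.Ioc_eq_empty (by omega)]
    simp
    positivity

lemma exp3_ge : (20:ℝ) ≤ rexp 3 := by
  have h := Real.exp_one_gt_d9
  have h3 : rexp 3 = (rexp 1)^3 := by
    rw [← Real.exp_nat_mul]
    norm_num
  rw [h3]
  have h0 : (2.7182818283:ℝ)^3 ≤ (rexp 1)^3 := by
    apply pow_le_pow_left₀ (by norm_num) h.le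
  nlinarith [h0]


end AuxLemmas

set_option maxHeartbeats 4000000 in
/-- For the `d`-dimensional Brownian sheet with `d ≥ 5` and fixed `x ∈ ℝ^d` and
`0 < a < b`, almost surely `W` does not hit `x` on `[a,b]²`. -/
theorem sheet_does_not_hit_point
    {Ω : Type*} [MeasureSpace Ω] [IsProbabilityMeasure (ℙ : Measure Ω)]
    (d : ℕ) (hd : 5 ≤ d)
    (W : ℝ × ℝ → Ω → Fin d → ℝ) (hW : IsBrownianSheetD d W) (x : Fin d → ℝ)
    (a b : ℝ) (ha : 0 < a) (hab : a < b) :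
    ∀ᵐ ω ∂(ℙ : Measure Ω), ∀ p ∈ Icc a b ×ˢ Icc a b, W p ω ≠ x := by
  classical
  obtain ⟨hW1, hWind⟩ := hW
  have hba : (0:ℝ) < b - a := by linarith
  have hb0 : (0:ℝ) < b := by linarith
  set δ : ℕ → ℝ := fun k => (b - a) / 2^k with hδ
  have hδpos : ∀ k, 0 < δ k := by
    intro k
    rw [hδ]
    positivity
  have hδhalf : ∀ k, δ (k+1) = δ k / 2 := by
    intro k
    rw [hδ]
    simp only []
    rw [pow_succ]
    ring
  have hδfull : ∀ k, (2:ℝ)^k * δ k = b - a := by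
    intro k
    rw [hδ]
    field_simp
  set pt : ℕ → ℕ → ℕ → ℝ × ℝ := fun k i j => (a + i * δ k, a + j * δ k) with hptdef
  set c1 : ℝ := 2*b*(b-a) with hc1
  have hc1pos : 0 < c1 := by rw [hc1]; positivity
  set sq6 : ℝ := Real.sqrt (6*c1) with hsq6
  have hsq6pos : 0 < sq6 := Real.sqrt_pos.mpr (by positivity)
  have hsq6sq : sq6^2 = 6*c1 := Real.sq_sqrt (by positivity)
  set lam : ℕ → ℝ := fun k => sq6 * ((k:ℝ) * (73/100)^k) with hlamdef
  have hlampos : ∀ k : ℕ, 1 ≤ k → 0 < lam k := by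
    intro k hk
    rw [hlamdef]
    have : (0:ℝ) < (k:ℝ) := by exact_mod_cast hk
    positivity
  set eps : ℕ → ℝ := fun m => 222 * sq6 * (3/4)^m with hepsdef
  have hepspos : ∀ m, 0 < eps m := by
    intro m
    rw [hepsdef]
    positivity
  set idx : ℕ → ℝ → ℕ := fun k s => (⌊(s - a) / δ k⌋).toNat with hidxdef
  -- coordinates of grid points
  have hcoord_lb : ∀ k (i : ℕ), a ≤ a + i * δ k := by
    intro k i
    have h0 : (0:ℝ) ≤ i * δ k := by positivity
    linarith
  have hcoord_ub : ∀ k (i : ℕ), i ≤ 2^k → a + i * δ k ≤ b := by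
    intro k i hi
    have hi' : (i:ℝ) ≤ 2^k := by exact_mod_cast hi
    have := hδfull k
    nlinarith [hδpos k]
  -- floor facts
  have hidx_le : ∀ k (s : ℝ), s ≤ b → idx k s ≤ 2^k := by
    intro k s hs
    rw [hidxdef]
    simp only []
    rw [Int.toNat_le]
    have h1 : (s - a) / δ k ≤ ((2^k : ℕ) : ℝ) := by
      rw [div_le_iff₀ (hδpos k)]
      push_cast
      nlinarith [hδfull k]
    calc ⌊(s - a) / δ k⌋ ≤ ⌊((2^k : ℕ) : ℝ)⌋ := Int.floor_le_floor h1
      _ = (2^k : ℕ) := Int.floor_natCast _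
  have hidx_cast : ∀ k (s : ℝ), a ≤ s → ((idx k s : ℕ) : ℝ) ≤ (s - a) / δ k := by
    intro k s hs
    rw [hidxdef]
    simp only []
    have h0 : (0:ℝ) ≤ (s - a) / δ k := by
      apply div_nonneg (by linarith) (hδpos k).le
    have hnn : 0 ≤ ⌊(s - a) / δ k⌋ := Int.floor_nonneg.mpr h0
    have hc : ((⌊(s - a) / δ k⌋.toNat : ℕ) : ℝ) = ((⌊(s - a) / δ k⌋ : ℤ) : ℝ) := by
      exact_mod_cast congrArg (fun n : ℤ => (n : ℝ)) (Int.toNat_of_nonneg hnn)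
    rw [hc]
    exact Int.floor_le _
  have hphi_le : ∀ k (s : ℝ), a ≤ s → a + idx k s * δ k ≤ s := by
    intro k s hs
    have h1 := hidx_cast k s hs
    have h2 : ((idx k s : ℕ) : ℝ) * δ k ≤ (s - a) / δ k * δ k :=
      mul_le_mul_of_nonneg_right h1 (hδpos k).le
    rw [div_mul_cancel₀ _ (hδpos k).ne'] at h2
    linarith
  have hphi_gt : ∀ k (s : ℝ), a ≤ s → s < a + idx k s * δ k + δ k := by
    intro k s hs
    have h0 : (0:ℝ) ≤ (s - a) / δ k := by
      apply div_nonneg (by linarith) (hδpos k).le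
    have hnn : 0 ≤ ⌊(s - a) / δ k⌋ := Int.floor_nonneg.mpr h0
    have h1 : (s - a) / δ k < ((idx k s : ℕ) : ℝ) + 1 := by
      rw [hidxdef]
      simp only []
      have hc : ((⌊(s - a) / δ k⌋.toNat : ℕ) : ℝ) = ((⌊(s - a) / δ k⌋ : ℤ) : ℝ) := by
        exact_mod_cast congrArg (fun n : ℤ => (n : ℝ)) (Int.toNat_of_nonneg hnn)
      rw [hc]
      exact Int.lt_floor_add_one _
    have h2 : s - a < (((idx k s : ℕ) : ℝ) + 1) * δ k := by
      rw [← div_lt_iff₀ (hδpos k)]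
      exact h1
    nlinarith [hδpos k]
  have hstep : ∀ k (s : ℝ), a ≤ s → idx (k+1) s = 2 * idx k s ∨ idx (k+1) s = 2 * idx k s + 1 := by
    intro k s hs
    have hz : (0:ℝ) ≤ (s - a) / δ k := by
      apply div_nonneg (by linarith) (hδpos k).le
    have h2 : (s - a) / δ (k+1) = 2 * ((s - a) / δ k) := by
      rw [hδhalf k]
      field_simp
    have l1 : 2*⌊(s - a) / δ k⌋ ≤ ⌊2 * ((s - a) / δ k)⌋ := by
      apply Int.le_floor.mpr
      push_cast
      nlinarith [Int.floor_le ((s - a) / δ k)]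
    have l2 : ⌊2 * ((s - a) / δ k)⌋ < 2*⌊(s - a) / δ k⌋ + 2 := by
      apply Int.floor_lt.mpr
      push_cast
      nlinarith [Int.lt_floor_add_one ((s - a) / δ k)]
    have hnn : 0 ≤ ⌊(s - a) / δ k⌋ := Int.floor_nonneg.mpr hz
    rw [hidxdef]
    simp only [h2]
    omega
  -- variance bound for adjacent pairs : horizontal
  have hvarH : ∀ (K : ℕ) (i j : ℕ), j ≤ 2^K →
      (pt K i j).1 * (pt K i j).2 + (pt K (i+1) j).1 * (pt K (i+1) j).2
        - 2*(min (pt K i j).1 (pt K (i+1) j).1 * min (pt K i j).2 (pt K (i+1) j).2)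
      ≤ c1 * (1/2)^K := by
    intro K i j hj
    have hδK := hδpos K
    have hc1half : c1 * (1/2)^K = 2*b*δ K := by
      rw [hc1, hδ]
      simp only []
      rw [div_pow, one_pow]
      ring
    have ht : a + (j:ℝ)*δ K ≤ b := hcoord_ub K j hj
    have key : δ K * (a + (j:ℝ)*δ K) ≤ c1 * (1/2)^K := by
      rw [hc1half]
      nlinarith [ha]
    rw [hptdef]
    simp only []
    push_cast
    rw [min_eq_left (by nlinarith), min_self]
    nlinarith [key]
  have hvarV : ∀ (K : ℕ) (i j : ℕ), i ≤ 2^K →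
      (pt K i j).1 * (pt K i j).2 + (pt K i (j+1)).1 * (pt K i (j+1)).2
        - 2*(min (pt K i j).1 (pt K i (j+1)).1 * min (pt K i j).2 (pt K i (j+1)).2)
      ≤ c1 * (1/2)^K := by
    intro K i j hi
    have hδK := hδpos K
    have hc1half : c1 * (1/2)^K = 2*b*δ K := by
      rw [hc1, hδ]
      simp only []
      rw [div_pow, one_pow]
      ring
    have ht : a + (i:ℝ)*δ K ≤ b := hcoord_ub K i hi
    have key : δ K * (a + (i:ℝ)*δ K) ≤ c1 * (1/2)^K := by
      rw [hc1half]
      nlinarith [ha]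
    rw [hptdef]
    simp only []
    push_cast
    rw [min_self, min_eq_left (by nlinarith)]
    nlinarith [key]
  have hσpos : ∀ K : ℕ, (0:ℝ) < c1 * (1/2)^K := by
    intro K
    positivity
  have hlamsq : ∀ K : ℕ, (lam K)^2 = 6*c1 * ((K:ℝ)^2 * ((5329:ℝ)/10000)^K) := by
    intro K
    rw [hlamdef]
    simp only []
    rw [mul_pow, hsq6sq, mul_pow, ← pow_mul, mul_comm K 2, pow_mul]
    norm_num
  have hq2 : ∀ K : ℕ, ((1:ℝ)/2)^K ≤ ((5329:ℝ)/10000)^K := by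
    intro K
    apply pow_le_pow_left₀ (by norm_num) (by norm_num)
  have hK2 : ∀ K : ℕ, 1 ≤ K → (K:ℝ) ≤ (K:ℝ)^2 := by
    intro K hK
    have h1 : (1:ℝ) ≤ (K:ℝ) := by exact_mod_cast hK
    nlinarith
  have hσlam : ∀ K : ℕ, 1 ≤ K → c1 * (1/2)^K ≤ (lam K)^2 := by
    intro K hK
    rw [hlamsq K]
    have h1 : (1:ℝ) ≤ (K:ℝ)^2 := by
      have : (1:ℝ) ≤ (K:ℝ) := by exact_mod_cast hK
      nlinarith
    have hqpos : (0:ℝ) ≤ ((5329:ℝ)/10000)^K := by positivity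
    have hchain : ((1:ℝ)/2)^K ≤ (K:ℝ)^2 * ((5329:ℝ)/10000)^K :=
      le_trans (hq2 K) (le_mul_of_one_le_left hqpos h1)
    nlinarith [hc1pos, hchain, pow_nonneg (by norm_num : (0:ℝ) ≤ 1/2) K]
  have hexp3 : ∀ K : ℕ, 1 ≤ K →
      2 * rexp (-(lam K)^2/(2*(c1 * (1/2)^K))) ≤ 2 * rexp (-(3:ℝ)*K) := by
    intro K hK
    have hσK := hσpos K
    have hexple : -(lam K)^2/(2*(c1 * (1/2)^K)) ≤ -(3:ℝ)*K := by
      rw [neg_div, neg_mul, neg_le_neg_iff]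
      rw [le_div_iff₀ (by positivity)]
      rw [hlamsq K]
      have hmul : (K:ℝ) * (1/2)^K ≤ (K:ℝ)^2 * ((5329:ℝ)/10000)^K := by
        apply mul_le_mul (hK2 K hK) (hq2 K) (by positivity) (by positivity)
      nlinarith [hc1pos, hmul]
    have := Real.exp_le_exp.mpr hexple
    linarith
  -- single pair probability bound
  have hptnn1 : ∀ (k i j : ℕ), (0:ℝ) ≤ (pt k i j).1 := by
    intro k i j
    exact le_of_lt (lt_of_lt_of_le ha (hcoord_lb k i))
  have hptnn2 : ∀ (k i j : ℕ), (0:ℝ) ≤ (pt k i j).2 := by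
    intro k i j
    exact le_of_lt (lt_of_lt_of_le ha (hcoord_lb k j))
  have hpairH : ∀ (K i j : ℕ), 1 ≤ K → j ≤ 2^K → ∀ c : Fin d,
      (ℙ : Measure Ω) {ω | lam K ≤ |W (pt K i j) ω c - W (pt K (i+1) j) ω c|}
        ≤ ENNReal.ofReal (2 * rexp (-(3:ℝ)*K)) := by
    intro K i j hK hj c
    have h1 := sheet_pair_prob (hW1 c) (u := pt K i j) (v := pt K (i+1) j)
      (σ2 := c1 * (1/2)^K) (lam := lam K)
      (hptnn1 K i j) (hptnn2 K i j) (hptnn1 K (i+1) j) (hptnn2 K (i+1) j)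
      (hσpos K) (hvarH K i j hj) (hσlam K hK) (hlampos K hK)
    exact le_trans h1 (ENNReal.ofReal_le_ofReal (hexp3 K hK))
  have hpairV : ∀ (K i j : ℕ), 1 ≤ K → i ≤ 2^K → ∀ c : Fin d,
      (ℙ : Measure Ω) {ω | lam K ≤ |W (pt K i j) ω c - W (pt K i (j+1)) ω c|}
        ≤ ENNReal.ofReal (2 * rexp (-(3:ℝ)*K)) := by
    intro K i j hK hi c
    have h1 := sheet_pair_prob (hW1 c) (u := pt K i j) (v := pt K i (j+1))
      (σ2 := c1 * (1/2)^K) (lam := lam K)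
      (hptnn1 K i j) (hptnn2 K i j) (hptnn1 K i (j+1)) (hptnn2 K i (j+1))
      (hσpos K) (hvarV K i j hi) (hσlam K hK) (hlampos K hK)
    exact le_trans h1 (ENNReal.ofReal_le_ofReal (hexp3 K hK))
  -- events
  set B : ℕ → Set Ω := fun m => {ω | ∀ k, m+1 ≤ k → ∀ i j : ℕ, i ≤ 2^k → j ≤ 2^k → ∀ c : Fin d,
      |W (pt k i j) ω c - W (pt k (i+1) j) ω c| < lam k ∧
      |W (pt k i j) ω c - W (pt k i (j+1)) ω c| < lam k} with hBdef
  set Ec : ℕ → ℕ → ℕ → Fin d → Set Ω := fun m i j c =>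
    (fun ω => W (pt m i j) ω c) ⁻¹' Icc (x c - eps m) (x c + eps m) with hEcdef
  set E2 : ℕ → Set Ω := fun m =>
    ⋃ i ∈ Finset.range (2^m+1), ⋃ j ∈ Finset.range (2^m+1), ⋂ c : Fin d, Ec m i j c with hE2def
  -- bound on the complement of B m
  have hBc : ∀ m : ℕ, (ℙ : Measure Ω) (B m)ᶜ
      ≤ ENNReal.ofReal (32*d) * (ENNReal.ofReal (1/5))^m := by
    intro m
    set Bad : ℕ → Set Ω := fun K => ⋃ i ∈ Finset.range (2^K+1), ⋃ j ∈ Finset.range (2^K+1),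
      ⋃ c : Fin d,
        ({ω | lam K ≤ |W (pt K i j) ω c - W (pt K (i+1) j) ω c|} ∪
         {ω | lam K ≤ |W (pt K i j) ω c - W (pt K i (j+1)) ω c|}) with hBaddef
    have hsub : (B m)ᶜ ⊆ ⋃ k : ℕ, Bad (m+1+k) := by
      intro ω hω
      rw [hBdef] at hω
      simp only [mem_compl_iff, mem_setOf_eq, not_forall] at hω
      obtain ⟨k, hk, i, j, hi, hj, c, hc⟩ := hω
      rw [mem_iUnion]
      refine ⟨k - (m+1), ?_⟩
      have hkk : m+1+(k-(m+1)) = k := by omega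
      rw [hkk, hBaddef]
      simp only [mem_iUnion, Finset.mem_range]
      refine ⟨i, by omega, j, by omega, c, ?_⟩
      rw [not_and_or] at hc
      rcases hc with hcc | hcc
      · left
        exact le_of_not_gt hcc
      · right
        exact le_of_not_gt hcc
    have hBad : ∀ K : ℕ, 1 ≤ K → (ℙ : Measure Ω) (Bad K)
        ≤ ENNReal.ofReal (16*d) * (ENNReal.ofReal (1/5))^K := by
      intro K hK
      set tK : ℝ≥0∞ := ENNReal.ofReal (2 * rexp (-(3:ℝ)*K)) with htK
      have hb1 : (ℙ : Measure Ω) (Bad K) ≤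
          ∑ _i ∈ Finset.range (2^K+1), ∑ _j ∈ Finset.range (2^K+1),
            ∑ _c : Fin d, (tK + tK) := by
        rw [hBaddef]
        refine le_trans (measure_biUnion_finset_le _ _) (Finset.sum_le_sum fun i _ => ?_)
        refine le_trans (measure_biUnion_finset_le _ _) (Finset.sum_le_sum fun j hj => ?_)
        refine le_trans (measure_iUnion_fintype_le _ _) (Finset.sum_le_sum fun c _ => ?_)
        refine le_trans (measure_union_le _ _) ?_
        apply add_le_add
        · exact hpairH K i j hK (by simpa using Nat.lt_succ_iff.mp (Finset.mem_range.mp hj)) c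
        · exact hpairV K i j hK (by simpa using Nat.lt_succ_iff.mp (Finset.mem_range.mp ‹i ∈ Finset.range (2^K+1)›)) c
      have hb2 : (∑ _i ∈ Finset.range (2^K+1), ∑ _j ∈ Finset.range (2^K+1),
          ∑ _c : Fin d, (tK + tK))
          = (((2^K+1)*(2^K+1)*d*2 : ℕ) : ℝ≥0∞) * ENNReal.ofReal (2 * rexp (-(3:ℝ)*K)) := by
        rw [htK]
        simp only [Finset.sum_const, Finset.card_range, Finset.card_univ, Fintype.card_fin,
          smul_eq_mul]
        push_cast
        ring
      rw [hb2] at hb1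
      refine le_trans hb1 ?_
      rw [← ENNReal.ofReal_natCast, ← ENNReal.ofReal_mul (Nat.cast_nonneg _),
        ← ENNReal.ofReal_pow (by norm_num : (0:ℝ) ≤ 1/5),
        ← ENNReal.ofReal_mul (by positivity)]
      apply ENNReal.ofReal_le_ofReal
      push_cast
      have h2K1 : (1:ℝ) ≤ 2^K := by
        simpa using pow_le_pow_left₀ (by norm_num : (0:ℝ) ≤ 1) (by norm_num : (1:ℝ) ≤ 2) K
      have h4K : (2:ℝ)^K * 2^K = 4^K := by
        rw [← mul_pow]
        norm_num
      have hNN : ((2:ℝ)^K+1)*((2:ℝ)^K+1) ≤ 4*4^K := by nlinarith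
      have hEk : rexp (-(3:ℝ)*K) ≤ (1/20)^K := by
        have h1 : -(3:ℝ)*K = (K:ℝ)*(-3) := by ring
        rw [h1, Real.exp_nat_mul]
        apply pow_le_pow_left₀ (Real.exp_pos _).le
        rw [Real.exp_neg, show (1:ℝ)/20 = 20⁻¹ by norm_num]
        exact inv_anti₀ (by norm_num) exp3_ge
      have hE0 : (0:ℝ) ≤ rexp (-(3:ℝ)*K) := (Real.exp_pos _).le
      have P : ((2:ℝ)^K+1)*((2:ℝ)^K+1) * rexp (-(3:ℝ)*K) ≤ 4*4^K*(1/20)^K :=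
        mul_le_mul hNN hEk hE0 (by positivity)
      have h45 : (4:ℝ)*4^K*(1/20)^K = 4*(1/5)^K := by
        rw [mul_assoc, ← mul_pow]
        norm_num
      calc ((2:ℝ)^K+1)*((2:ℝ)^K+1)*(d:ℝ)*2 * (2 * rexp (-(3:ℝ)*K))
          = 4*(d:ℝ)*(((2:ℝ)^K+1)*((2:ℝ)^K+1) * rexp (-(3:ℝ)*K)) := by ring
        _ ≤ 4*(d:ℝ)*(4*4^K*(1/20)^K) := by
            apply mul_le_mul_of_nonneg_left P (by positivity)
        _ = 16*(d:ℝ)*(1/5)^K := by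
            rw [h45]
            ring
    have hμ : (ℙ : Measure Ω) (B m)ᶜ ≤ ∑' k : ℕ, (ℙ : Measure Ω) (Bad (m+1+k)) :=
      le_trans (measure_mono hsub) (measure_iUnion_le _)
    have hsum : (∑' k : ℕ, (ℙ : Measure Ω) (Bad (m+1+k)))
        ≤ ∑' k : ℕ, ENNReal.ofReal (16*d) * (ENNReal.ofReal (1/5))^(m+1+k) :=
      ENNReal.tsum_le_tsum (fun k => hBad _ (by omega))
    have hgeo : (∑' k : ℕ, ENNReal.ofReal (16*d) * (ENNReal.ofReal (1/5))^(m+1+k))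
        ≤ ENNReal.ofReal (32*d) * (ENNReal.ofReal (1/5))^m := by
      set r : ℝ≥0∞ := ENNReal.ofReal (1/5) with hr
      have hr2 : r ≤ 2⁻¹ := by
        rw [hr, show ((2:ℝ≥0∞))⁻¹ = ENNReal.ofReal ((2:ℝ)⁻¹) by
          rw [ENNReal.ofReal_inv_of_pos (by norm_num), ENNReal.ofReal_ofNat]]
        exact ENNReal.ofReal_le_ofReal (by norm_num)
      have hr1 : r ≤ 1 := le_trans hr2 (by norm_num)
      have hsg : (∑' k : ℕ, r^k) ≤ 2 := by
        calc (∑' k : ℕ, r^k) ≤ ∑' k : ℕ, (2⁻¹:ℝ≥0∞)^k :=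
              ENNReal.tsum_le_tsum (fun k => pow_le_pow_left₀ (zero_le) hr2 k)
          _ = (1 - 2⁻¹)⁻¹ := ENNReal.tsum_geometric _
          _ = 2 := by rw [ENNReal.one_sub_inv_two, inv_inv]
      have heq : (∑' k : ℕ, ENNReal.ofReal (16*d) * r^(m+1+k))
          = ENNReal.ofReal (16*d) * r^(m+1) * ∑' k : ℕ, r^k := by
        rw [← ENNReal.tsum_mul_left]
        congr 1
        funext k
        rw [pow_add]
        ring
      rw [heq]
      calc ENNReal.ofReal (16*d) * r^(m+1) * (∑' k : ℕ, r^k)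
          ≤ ENNReal.ofReal (16*d) * r^(m+1) * 2 := by
            exact mul_le_mul_right hsg _
        _ ≤ ENNReal.ofReal (16*d) * r^m * 2 := by
            apply mul_le_mul_left
            apply mul_le_mul_right
            calc r^(m+1) = r^m * r := pow_succ r m
              _ ≤ r^m * 1 := mul_le_mul_right hr1 _
              _ = r^m := mul_one _
        _ = ENNReal.ofReal (32*d) * r^m := by
            rw [show (32:ℝ)*d = 2*(16*d) by ring, ENNReal.ofReal_mul (by norm_num : (0:ℝ) ≤ 2),
              ENNReal.ofReal_ofNat]
            ring
    exact le_trans hμ (le_trans hsum hgeo)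
  -- bound on E2 m
  have hE2b : ∀ m : ℕ, (ℙ : Measure Ω) (E2 m)
      ≤ ENNReal.ofReal (4*((222*sq6)/a)^d) * (ENNReal.ofReal (4*(3/4)^d))^m := by
    intro m
    have hcell : ∀ i j : ℕ,
        (ℙ : Measure Ω) (⋂ c : Fin d, Ec m i j c) ≤ (ENNReal.ofReal (eps m / a))^d := by
      intro i j
      have hprod : (ℙ : Measure Ω) (⋂ c : Fin d, Ec m i j c)
          = ∏ c : Fin d, (ℙ : Measure Ω) (Ec m i j c) := by
        apply hWind.meas_iInter
        intro c
        refine ⟨(fun f : ℝ × ℝ → ℝ => f (pt m i j)) ⁻¹' Icc (x c - eps m) (x c + eps m),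
          (measurable_pi_apply _) measurableSet_Icc, ?_⟩
        rw [hEcdef]
        rfl
      rw [hprod]
      calc (∏ c : Fin d, (ℙ : Measure Ω) (Ec m i j c))
          ≤ ∏ _c : Fin d, ENNReal.ofReal (eps m / a) := by
            apply Finset.prod_le_prod'
            intro c _
            rw [hEcdef]
            exact sheet_ball_prob (hW1 c) ha (hcoord_lb m i) (hcoord_lb m j) (hepspos m).le
        _ = (ENNReal.ofReal (eps m / a))^d := by
            rw [Finset.prod_const, Finset.card_univ, Fintype.card_fin]
    have hb1 : (ℙ : Measure Ω) (E2 m) ≤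
        ∑ _i ∈ Finset.range (2^m+1), ∑ _j ∈ Finset.range (2^m+1),
          (ENNReal.ofReal (eps m / a))^d := by
      rw [hE2def]
      refine le_trans (measure_biUnion_finset_le _ _) (Finset.sum_le_sum fun i _ => ?_)
      refine le_trans (measure_biUnion_finset_le _ _) (Finset.sum_le_sum fun j _ => ?_)
      exact hcell i j
    have hb2 : (∑ _i ∈ Finset.range (2^m+1), ∑ _j ∈ Finset.range (2^m+1),
          (ENNReal.ofReal (eps m / a))^d)
        = (((2^m+1)*(2^m+1) : ℕ) : ℝ≥0∞) * (ENNReal.ofReal (eps m / a))^d := by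
      simp only [Finset.sum_const, Finset.card_range, smul_eq_mul]
      push_cast
      ring
    rw [hb2] at hb1
    refine le_trans hb1 ?_
    have hea : 0 ≤ eps m / a := div_nonneg (hepspos m).le ha.le
    rw [← ENNReal.ofReal_natCast, ← ENNReal.ofReal_pow hea,
      ← ENNReal.ofReal_mul (Nat.cast_nonneg _),
      ← ENNReal.ofReal_pow (by positivity : (0:ℝ) ≤ 4*(3/4)^d),
      ← ENNReal.ofReal_mul (by positivity)]
    apply ENNReal.ofReal_le_ofReal
    push_cast
    -- real inequality
    have h2m1 : (1:ℝ) ≤ 2^m := by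
      simpa using pow_le_pow_left₀ (by norm_num : (0:ℝ) ≤ 1) (by norm_num : (1:ℝ) ≤ 2) m
    have h4m : (2:ℝ)^m * 2^m = 4^m := by
      rw [← mul_pow]
      norm_num
    have hNN : ((2:ℝ)^m+1)*((2:ℝ)^m+1) ≤ 4*4^m := by nlinarith
    have hepsa : eps m / a = (222*sq6/a) * (3/4)^m := by
      rw [hepsdef]
      simp only []
      ring
    have hpowd : (eps m / a)^d = (222*sq6/a)^d * ((4:ℝ)*(3/4)^d)^m / 4^m := by
      rw [hepsa, mul_pow, mul_pow, ← pow_mul, mul_comm m d, pow_mul]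
      have h4m0 : (0:ℝ) < 4^m := by positivity
      field_simp
    rw [hpowd]
    have hq0 : (0:ℝ) ≤ (222*sq6/a)^d * ((4:ℝ)*(3/4)^d)^m / 4^m := by positivity
    calc ((2:ℝ)^m+1)*((2:ℝ)^m+1) * ((222*sq6/a)^d * ((4:ℝ)*(3/4)^d)^m / 4^m)
        ≤ (4*4^m) * ((222*sq6/a)^d * ((4:ℝ)*(3/4)^d)^m / 4^m) :=
          mul_le_mul_of_nonneg_right hNN hq0
      _ = 4*(222*sq6/a)^d * ((4:ℝ)*(3/4)^d)^m := by
          have h4m0 : (0:ℝ) < 4^m := by positivity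
          field_simp
  -- chaining
  have hchain : ∀ m : ℕ, ∀ ω ∈ B m, ∀ p ∈ Icc a b ×ˢ Icc a b, ∀ c : Fin d,
      |W (pt m (idx m p.1) (idx m p.2)) ω c - W p ω c| ≤ eps m := by
    intro m ω hω p hp c
    rw [Set.mem_prod] at hp
    obtain ⟨hp1, hp2⟩ := hp
    rw [mem_Icc] at hp1 hp2
    obtain ⟨hp1a, hp1b⟩ := hp1
    obtain ⟨hp2a, hp2b⟩ := hp2
    rw [hBdef] at hω
    -- partial sums of lam are bounded by eps m
    have hsum : ∀ K : ℕ, (∑ k ∈ Finset.Ioc m K, 2 * lam k) ≤ eps m := by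
      intro K
      have h1 : ∀ k : ℕ, lam k ≤ sq6 * (37 * (3/4)^k) := by
        intro k
        rw [hlamdef]
        exact mul_le_mul_of_nonneg_left (kpow_le_aux k) hsq6pos.le
      calc (∑ k ∈ Finset.Ioc m K, 2 * lam k)
          ≤ ∑ k ∈ Finset.Ioc m K, 74*sq6*(3/4)^k :=
            Finset.sum_le_sum (fun k _ => by nlinarith [h1 k])
        _ = 74*sq6 * ∑ k ∈ Finset.Ioc m K, (3/4)^k := by
            rw [Finset.mul_sum]
        _ ≤ 74*sq6 * (3*(3/4)^m) :=
            mul_le_mul_of_nonneg_left (geo_sum34_aux m K) (by positivity)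
        _ = eps m := by
            rw [hepsdef]
            ring
    -- doubling identity for grid points
    have hdouble : ∀ (K i j : ℕ), pt K i j = pt (K+1) (2*i) (2*j) := by
      intro K i j
      rw [hptdef]
      simp only [Prod.mk.injEq]
      constructor
      · push_cast
        rw [hδhalf K]
        ring
      · push_cast
        rw [hδhalf K]
        ring
    have hpow2 : ∀ K : ℕ, (2:ℕ)^(K+1) = 2*2^K := by
      intro K
      rw [pow_succ]
      ring
    -- one chaining step
    have hstepb : ∀ K : ℕ, m ≤ K → |W (pt (K+1) (idx (K+1) p.1) (idx (K+1) p.2)) ω c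
        - W (pt K (idx K p.1) (idx K p.2)) ω c| ≤ 2 * lam (K+1) := by
      intro K hmK
      have hiK : idx K p.1 ≤ 2^K := hidx_le K p.1 hp1b
      have hjK : idx K p.2 ≤ 2^K := hidx_le K p.2 hp2b
      have hi1 : idx (K+1) p.1 ≤ 2^(K+1) := hidx_le (K+1) p.1 hp1b
      have hlamnn : 0 ≤ lam (K+1) := (hlampos (K+1) (by omega)).le
      -- horizontal move
      have h1 : |W (pt (K+1) (idx (K+1) p.1) (2*idx K p.2)) ω c
          - W (pt K (idx K p.1) (idx K p.2)) ω c| ≤ lam (K+1) := by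
        rw [hdouble K (idx K p.1) (idx K p.2)]
        rcases hstep K p.1 hp1a with he | he
        · rw [he, sub_self, abs_zero]
          exact hlamnn
        · have hev := (hω (K+1) (by omega) (2*idx K p.1) (2*idx K p.2)
            (by rw [hpow2 K]; omega) (by rw [hpow2 K]; omega) c).1
          rw [he, abs_sub_comm]
          exact le_of_lt hev
      -- vertical move
      have h2 : |W (pt (K+1) (idx (K+1) p.1) (idx (K+1) p.2)) ω c
          - W (pt (K+1) (idx (K+1) p.1) (2*idx K p.2)) ω c| ≤ lam (K+1) := by
        rcases hstep K p.2 hp2a with he | he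
        · rw [he, sub_self, abs_zero]
          exact hlamnn
        · have hev := (hω (K+1) (by omega) (idx (K+1) p.1) (2*idx K p.2)
            hi1 (by rw [hpow2 K]; omega) c).2
          rw [he, abs_sub_comm]
          exact le_of_lt hev
      calc |W (pt (K+1) (idx (K+1) p.1) (idx (K+1) p.2)) ω c
            - W (pt K (idx K p.1) (idx K p.2)) ω c|
          ≤ |W (pt (K+1) (idx (K+1) p.1) (idx (K+1) p.2)) ω c
              - W (pt (K+1) (idx (K+1) p.1) (2*idx K p.2)) ω c|
            + |W (pt (K+1) (idx (K+1) p.1) (2*idx K p.2)) ω c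
              - W (pt K (idx K p.1) (idx K p.2)) ω c| := abs_sub_le _ _ _
        _ ≤ lam (K+1) + lam (K+1) := add_le_add h2 h1
        _ = 2 * lam (K+1) := by ring
    -- telescoping
    have htel : ∀ K : ℕ, m ≤ K → |W (pt K (idx K p.1) (idx K p.2)) ω c
        - W (pt m (idx m p.1) (idx m p.2)) ω c| ≤ ∑ k ∈ Finset.Ioc m K, 2 * lam k := by
      intro K hK
      induction K, hK using Nat.le_induction with
      | base => simp [Finset.Ioc_self]
      | succ K hK ih =>
        rw [Finset.sum_Ioc_succ_top (by omega)]
        calc |W (pt (K+1) (idx (K+1) p.1) (idx (K+1) p.2)) ω c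
              - W (pt m (idx m p.1) (idx m p.2)) ω c|
            ≤ |W (pt (K+1) (idx (K+1) p.1) (idx (K+1) p.2)) ω c
                - W (pt K (idx K p.1) (idx K p.2)) ω c|
              + |W (pt K (idx K p.1) (idx K p.2)) ω c
                - W (pt m (idx m p.1) (idx m p.2)) ω c| := abs_sub_le _ _ _
          _ ≤ 2 * lam (K+1) + ∑ k ∈ Finset.Ioc m K, 2 * lam k :=
              add_le_add (hstepb K hK) ih
          _ = (∑ k ∈ Finset.Ioc m K, 2 * lam k) + 2 * lam (K+1) := by ring
    -- convergence of the grid approximations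
    have hδ0 : Tendsto δ atTop (nhds 0) := by
      have : δ = fun K => (b-a) * (1/2:ℝ)^K := by
        funext K
        rw [hδ]
        rw [div_pow, one_pow]
        ring
      rw [this]
      have h0 : Tendsto (fun K => ((1:ℝ)/2)^K) atTop (nhds 0) :=
        tendsto_pow_atTop_nhds_zero_of_lt_one (by norm_num) (by norm_num)
      simpa using h0.const_mul (b-a)
    have happrox : ∀ (s : ℝ), a ≤ s → s ≤ b →
        Tendsto (fun K => a + idx K s * δ K) atTop (nhds s) := by
      intro s hsa hsb
      have hb1 : ∀ K, |a + idx K s * δ K - s| ≤ δ K := by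
        intro K
        rw [abs_le]
        constructor
        · have := hphi_gt K s hsa
          linarith
        · have := hphi_le K s hsa
          linarith [hδpos K]
      have h1 : Tendsto (fun K => a + idx K s * δ K - s) atTop (nhds 0) :=
        squeeze_zero_norm hb1 hδ0
      have := h1.add (tendsto_const_nhds (x := s))
      simpa using this
    have hconv : Tendsto (fun K => W (pt K (idx K p.1) (idx K p.2)) ω c) atTop
        (nhds (W p ω c)) := by
      have hcont : Continuous (fun q : ℝ × ℝ => W q ω c) := (hW1 c).1 ω
      have hpt_tendsto : Tendsto (fun K => pt K (idx K p.1) (idx K p.2)) atTop (nhds p) := by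
        rw [hptdef]
        have h1 := happrox p.1 hp1a hp1b
        have h2 := happrox p.2 hp2a hp2b
        rw [show p = (p.1, p.2) from rfl]
        exact h1.prodMk_nhds h2
      exact (hcont.tendsto p).comp hpt_tendsto
    -- pass to the limit
    have hbnd : ∀ K, m ≤ K → |W (pt K (idx K p.1) (idx K p.2)) ω c
        - W (pt m (idx m p.1) (idx m p.2)) ω c| ≤ eps m :=
      fun K hK => le_trans (htel K hK) (hsum K)
    have hlim : Tendsto (fun K => |W (pt K (idx K p.1) (idx K p.2)) ω c
        - W (pt m (idx m p.1) (idx m p.2)) ω c|) atTop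
        (nhds (|W p ω c - W (pt m (idx m p.1) (idx m p.2)) ω c|)) :=
      (hconv.sub tendsto_const_nhds).abs
    have hfin : |W p ω c - W (pt m (idx m p.1) (idx m p.2)) ω c| ≤ eps m := by
      apply le_of_tendsto hlim
      filter_upwards [eventually_ge_atTop m] with K hK
      exact hbnd K hK
    rw [abs_sub_comm] at hfin
    exact hfin
  -- the hitting event
  set Hit : Set Ω := {ω | ∃ p ∈ Icc a b ×ˢ Icc a b, W p ω = x} with hHitdef
  have hHsub : ∀ m : ℕ, Hit ⊆ (B m)ᶜ ∪ E2 m := by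
    intro m ω hωHit
    rw [hHitdef, mem_setOf_eq] at hωHit
    obtain ⟨p, hp, hpx⟩ := hωHit
    by_cases hB' : ω ∈ B m
    · right
      rw [hE2def]
      simp only [mem_iUnion, Finset.mem_range]
      have hp1b : p.1 ≤ b := by
        rw [Set.mem_prod, mem_Icc, mem_Icc] at hp
        exact hp.1.2
      have hp2b : p.2 ≤ b := by
        rw [Set.mem_prod, mem_Icc, mem_Icc] at hp
        exact hp.2.2
      refine ⟨idx m p.1, by have := hidx_le m p.1 hp1b; omega,
        idx m p.2, by have := hidx_le m p.2 hp2b; omega, ?_⟩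
      rw [mem_iInter]
      intro c
      have hcc := hchain m ω hB' p hp c
      have hx : W p ω c = x c := congrFun hpx c
      rw [hx] at hcc
      rw [hEcdef]
      simp only [mem_preimage, mem_Icc]
      have habs := abs_le.mp hcc
      constructor
      · linarith [habs.1]
      · linarith [habs.2]
    · left
      exact hB'
  have hzero : (ℙ : Measure Ω) Hit = 0 := by
    have hofreal15 : ENNReal.ofReal (1/5) < 1 := by
      rw [show (1:ℝ≥0∞) = ENNReal.ofReal 1 by rw [ENNReal.ofReal_one]]
      rw [ENNReal.ofReal_lt_ofReal_iff (by norm_num)]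
      norm_num
    have hofreal34 : ENNReal.ofReal (4*(3/4)^d) < 1 := by
      rw [show (1:ℝ≥0∞) = ENNReal.ofReal 1 by rw [ENNReal.ofReal_one]]
      rw [ENNReal.ofReal_lt_ofReal_iff (by norm_num)]
      have h1 : ((3:ℝ)/4)^d ≤ (3/4)^5 :=
        pow_le_pow_of_le_one (by norm_num) (by norm_num) hd
      nlinarith [h1]
    have t1 : Tendsto (fun m => ENNReal.ofReal (32*d) * (ENNReal.ofReal (1/5))^m)
        atTop (nhds 0) := by
      have h0 := ENNReal.tendsto_pow_atTop_nhds_zero_of_lt_one hofreal15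
      have h1 := ENNReal.Tendsto.const_mul (a := ENNReal.ofReal (32*d)) h0
        (Or.inr (ENNReal.ofReal_ne_top (r := 32*d)))
      simpa using h1
    have t2 : Tendsto (fun m => ENNReal.ofReal (4*((222*sq6)/a)^d)
        * (ENNReal.ofReal (4*(3/4)^d))^m) atTop (nhds 0) := by
      have h0 := ENNReal.tendsto_pow_atTop_nhds_zero_of_lt_one hofreal34
      have h1 := ENNReal.Tendsto.const_mul (a := ENNReal.ofReal (4*((222*sq6)/a)^d)) h0
        (Or.inr (ENNReal.ofReal_ne_top (r := 4*((222*sq6)/a)^d)))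
      simpa using h1
    have hF : Tendsto (fun m => ENNReal.ofReal (32*d) * (ENNReal.ofReal (1/5))^m
        + ENNReal.ofReal (4*((222*sq6)/a)^d) * (ENNReal.ofReal (4*(3/4)^d))^m)
        atTop (nhds 0) := by
      have := t1.add t2
      simpa using this
    have hle : ∀ m : ℕ, (ℙ : Measure Ω) Hit
        ≤ ENNReal.ofReal (32*d) * (ENNReal.ofReal (1/5))^m
          + ENNReal.ofReal (4*((222*sq6)/a)^d) * (ENNReal.ofReal (4*(3/4)^d))^m := by
      intro m
      refine le_trans (measure_mono (hHsub m)) ?_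
      refine le_trans (measure_union_le _ _) ?_
      exact add_le_add (hBc m) (hE2b m)
    exact le_antisymm (ge_of_tendsto' hF hle) (zero_le)
  rw [ae_iff]
  convert hzero using 2
  ext ω
  simp only [mem_setOf_eq, hHitdef]
  push_neg
  rfl
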